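/- Let X +_f W be an Artin–Wraith glueing and let π : Y → X and ϖ : Z → W be continuous maps between topological spaces. Let f* be the pullback of f with respect to π and id_W, let (f*)* be the pullback of f* with respect to id_Y and ϖ, and let f** be the pullback of f with respect to π and ϖ. Then the maps id+id : Y +_{f**} Z → Y +_{(f*)*} Z, id+ϖ : Y +_{(f*)*} Z → Y +_{f*} W and π+id : Y +_{f*} W → X +_f W are all continuous. Consequently, for every admissible map g : Closed(Y) → Closed(Z) such that π+ϖ : Y +_g Z → X +_f W is continuous, the map id+ϖ : Y +_g Z → Y +_{f*} W is continuous. -/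

import Mathlib

namespace Paper

open Set Topology

/-! ### Coarse structures -/

/-- The inverse of a relation `e ⊆ X × X`. -/
def invRel {X : Type*} (e : Set (X × X)) : Set (X × X) := {p | (p.2, p.1) ∈ e}

/-- The composition of relations: `compRel e e' = {(a,b) | ∃ c, (a,c) ∈ e ∧ (c,b) ∈ e'}`.
This is `e' ∘ e` in the paper's notation. -/
def compRel {X : Type*} (e e' : Set (X × X)) : Set (X × X) :=
  {p | ∃ c, (p.1, c) ∈ e ∧ (c, p.2) ∈ e'}

/-- A coarse structure on a set `X`. -/
def IsCoarseStructure {X : Type*} (ε : Set (Set (X × X))) : Prop :=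
  Set.diagonal X ∈ ε ∧
  (∀ e ∈ ε, ∀ e' : Set (X × X), e' ⊆ e → e' ∈ ε) ∧
  (∀ e ∈ ε, ∀ e' ∈ ε, e ∪ e' ∈ ε) ∧
  (∀ e ∈ ε, invRel e ∈ ε) ∧
  (∀ e ∈ ε, ∀ e' ∈ ε, compRel e e' ∈ ε)

/-- The coarse structure generated by a family `A` of subsets of `X × X`:
the intersection of all coarse structures containing `A`. -/
def genCoarse {X : Type*} (A : Set (Set (X × X))) : Set (Set (X × X)) :=
  ⋂₀ {ε | IsCoarseStructure ε ∧ A ⊆ ε}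

/-- The `u`-neighbourhood `𝔅(B, u)` of a subset `B`. -/
def Bnh {X : Type*} (B : Set X) (u : Set (X × X)) : Set X := {x | ∃ y ∈ B, (x, y) ∈ u}

/-- A subset `B` is bounded for the coarse structure `ε` if `B × B ∈ ε`. -/
def CBounded {X : Type*} (ε : Set (Set (X × X))) (B : Set X) : Prop := B ×ˢ B ∈ ε

/-- A map is bornologous if it sends entourages to entourages. -/
def Bornologous {X Y : Type*} (ε : Set (Set (X × X))) (ζ : Set (Set (Y × Y)))
    (f : X → Y) : Prop :=
  ∀ e ∈ ε, Prod.map f f '' e ∈ ζ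

/-- A map is (coarsely) proper if preimages of bounded sets are bounded. -/
def CProper {X Y : Type*} (ε : Set (Set (X × X))) (ζ : Set (Set (Y × Y)))
    (f : X → Y) : Prop :=
  ∀ B : Set Y, CBounded ζ B → CBounded ε (f ⁻¹' B)

/-- A coarse map is a proper bornologous map. -/
def CoarseMap {X Y : Type*} (ε : Set (Set (X × X))) (ζ : Set (Set (Y × Y)))
    (f : X → Y) : Prop :=
  Bornologous ε ζ f ∧ CProper ε ζ f

/-- Two maps `f g : S → X` are close if `{(f s, g s) | s ∈ S}` is an entourage. -/
def Close {S X : Type*} (ε : Set (Set (X × X))) (f g : S → X) : Prop :=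
  Set.range (fun s => (f s, g s)) ∈ ε

/-- A coarse equivalence: a coarse map with a coarse quasi-inverse. -/
def CoarseEquiv {X Y : Type*} (ε : Set (Set (X × X))) (ζ : Set (Set (Y × Y)))
    (f : X → Y) : Prop :=
  CoarseMap ε ζ f ∧
    ∃ g : Y → X, CoarseMap ζ ε g ∧ Close ζ (f ∘ g) id ∧ Close ε (g ∘ f) id

/-- The subspace coarse structure on `A ⊆ Y`. -/
def SubCoarse {Y : Type*} (ζ : Set (Set (Y × Y))) (A : Set Y) : Set (Set (↥A × ↥A)) :=
  {e | Prod.map (Subtype.val : A → Y) (Subtype.val : A → Y) '' e ∈ ζ}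

/-- A coarse embedding: a coarse map which is a coarse equivalence onto its image with
the subspace coarse structure. -/
def CoarseEmbedding {X Y : Type*} (ε : Set (Set (X × X))) (ζ : Set (Set (Y × Y)))
    (f : X → Y) : Prop :=
  CoarseMap ε ζ f ∧ CoarseEquiv ε (SubCoarse ζ (Set.range f)) (Set.rangeFactorization f)

/-- A coarse space is coarsely connected if every pair lies in some entourage. -/
def CoarselyConnected {X : Type*} (ε : Set (Set (X × X))) : Prop :=
  ∀ x y : X, ∃ e ∈ ε, (x, y) ∈ e

/-- `A` is quasi-dense if `𝔅(A, e) = X` for some entourage `e`. -/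
def QuasiDense {X : Type*} (ε : Set (Set (X × X))) (A : Set X) : Prop :=
  ∃ e ∈ ε, Bnh A e = Set.univ

/-- A subset of a topological space is topologically bounded if its closure is compact. -/
def TopBounded {X : Type*} [TopologicalSpace X] (B : Set X) : Prop := IsCompact (closure B)

/-- A coarse structure on a topological space is proper if it contains a neighbourhood of
the diagonal and every bounded set is topologically bounded. -/
def ProperCoarse {X : Type*} [TopologicalSpace X] (ε : Set (Set (X × X))) : Prop :=
  (∃ e ∈ ε, e ∈ nhdsSet (Set.diagonal X)) ∧ ∀ B : Set X, CBounded ε B → TopBounded B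

/-! ### Artin–Wraith glueings -/

/-- An admissible map `f : Closed(X) → Closed(Y)`. -/
def Admissible {X Y : Type*} [TopologicalSpace X] [TopologicalSpace Y]
    (f : Set X → Set Y) : Prop :=
  (∀ A : Set X, IsClosed A → IsClosed (f A)) ∧
  (∀ A B : Set X, IsClosed A → IsClosed B → f (A ∪ B) = f A ∪ f B) ∧
  f ∅ = ∅

/-- The closed sets of the Artin–Wraith glueing `X +_f Y`. -/
def AWClosed {X Y : Type*} [TopologicalSpace X] [TopologicalSpace Y]
    (f : Set X → Set Y) : Set (Set (X ⊕ Y)) :=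
  {A | IsClosed (Sum.inl ⁻¹' A) ∧ IsClosed (Sum.inr ⁻¹' A) ∧
    Sum.inr '' f (Sum.inl ⁻¹' A) ⊆ A}

/-- The topology of the Artin–Wraith glueing `X +_f Y` on `X ⊕ Y`. (For admissible `f`,
the closed sets of this topology are exactly the members of `AWClosed f`.) -/
def AWTop {X Y : Type*} [TopologicalSpace X] [TopologicalSpace Y]
    (f : Set X → Set Y) : TopologicalSpace (X ⊕ Y) :=
  TopologicalSpace.generateFrom (compl '' AWClosed f)

/-- `X +_f W` is a (Hausdorff) compactification of `X`: a compact Hausdorff Artin–Wraith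
glueing in which `X` is dense. -/
def IsCompactification {X W : Type*} [TopologicalSpace X] [TopologicalSpace W]
    (f : Set X → Set W) : Prop :=
  Admissible f ∧
  @CompactSpace (X ⊕ W) (AWTop f) ∧
  @T2Space (X ⊕ W) (AWTop f) ∧
  @Dense (X ⊕ W) (AWTop f) (Set.range Sum.inl)

/-- A relation `e ⊆ X × X` is proper if `𝔅(B,e)` and `𝔅(B,e⁻¹)` are topologically
bounded for every topologically bounded `B`. -/
def ProperRel {X : Type*} [TopologicalSpace X] (e : Set (X × X)) : Prop :=
  ∀ B : Set X, TopBounded B → TopBounded (Bnh B e) ∧ TopBounded (Bnh B (invRel e))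

/-- `e` is a perspective subset of `X × X` with respect to the compactification `X +_f W`. -/
def PerspRel {X W : Type*} [TopologicalSpace X] [TopologicalSpace W]
    (f : Set X → Set W) (e : Set (X × X)) : Prop :=
  ProperRel e ∧
  ∀ y : W, ∀ V : Set (X ⊕ W), IsOpen[AWTop f] V → Sum.inr y ∈ V →
    ∃ U : Set (X ⊕ W), IsOpen[AWTop f] U ∧ Sum.inr y ∈ U ∧ U ⊆ V ∧
      ∀ p ∈ e, Sum.inl p.1 ∈ U → Sum.inl p.2 ∈ V

/-- A perspective compactification of the coarse space `(X, ε)`. -/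
def PerspCompactification {X W : Type*} [TopologicalSpace X] [TopologicalSpace W]
    (ε : Set (Set (X × X))) (f : Set X → Set W) : Prop :=
  IsCompactification f ∧ ∀ e ∈ ε, PerspRel f e

/-- The pullback of `f : Closed(X) → Closed(W)` with respect to `π : Y → X` and
`ϖ : Z → W`. -/
def pullbackAW {X Y Z W : Type*} [TopologicalSpace X] [TopologicalSpace Z]
    (f : Set X → Set W) (π : Y → X) (ϖ : Z → W) (A : Set Y) : Set Z :=
  closure (ϖ ⁻¹' (f (closure (π '' A))))

/-! ### Group actions -/

/-- `φ : G → X → X` is an action by homeomorphisms. -/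
def IsActionByHomeos {G X : Type*} [Group G] [TopologicalSpace X]
    (φ : G → X → X) : Prop :=
  (∀ g : G, Continuous (φ g)) ∧ (∀ x : X, φ 1 x = x) ∧
    ∀ g h : G, ∀ x : X, φ (g * h) x = φ g (φ h x)

/-- A properly discontinuous action. -/
def ProperlyDisc {G X : Type*} [TopologicalSpace X] (φ : G → X → X) : Prop :=
  ∀ K : Set X, IsCompact K → {g : G | (φ g '' K ∩ K).Nonempty}.Finite

/-- A cocompact action. -/
def CocompactAct {G X : Type*} [TopologicalSpace X] (φ : G → X → X) : Prop :=
  ∃ K : Set X, IsCompact K ∧ (⋃ g : G, φ g '' K) = Set.univ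

/-- The saturation `Sat(A) = {(φ(g,x), φ(g,x')) : g ∈ G, x, x' ∈ A}`. -/
def Sat {G X : Type*} (φ : G → X → X) (A : Set X) : Set (X × X) :=
  {p | ∃ g : G, ∃ x ∈ A, ∃ x' ∈ A, p = (φ g x, φ g x')}

/-- The coarse structure `ε_φ` on `X` generated by the saturations of topologically
bounded sets. -/
def coarseOfAction {G X : Type*} [TopologicalSpace X] (φ : G → X → X) :
    Set (Set (X × X)) :=
  genCoarse {e | ∃ A : Set X, TopBounded A ∧ e = Sat φ A}

/-- The saturation for the left multiplication action of a group on itself. -/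
def SatMul {G : Type*} [Group G] (U : Set G) : Set (G × G) :=
  {p | ∃ g : G, ∃ u ∈ U, ∃ u' ∈ U, p = (g * u, g * u')}

/-- The coarse structure `ε_G` on the group `G`, generated by the saturations of
finite subsets under the left multiplication action. -/
def coarseGroup (G : Type*) [Group G] : Set (Set (G × G)) :=
  genCoarse {e | ∃ U : Set G, U.Finite ∧ e = SatMul U}

/-- The compactification `X +_f W` is group-theoretically perspective with respect to the
action `φ`. -/
def GTPerspective {G X W : Type*} [TopologicalSpace X] [TopologicalSpace W]
    (φ : G → X → X) (f : Set X → Set W) : Prop :=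
  ∀ K : Set X, IsCompact K → ∀ y : W, ∀ U : Set (X ⊕ W),
    IsOpen[AWTop f] U → Sum.inr y ∈ U →
      ∃ V : Set (X ⊕ W), IsOpen[AWTop f] V ∧ Sum.inr y ∈ V ∧ V ⊆ U ∧
        ∀ g : G, (∃ x ∈ K, Sum.inl (φ g x) ∈ V) → ∀ x ∈ K, Sum.inl (φ g x) ∈ U

/-! ### Rays and accessibility -/

/-- A family `Ψ` of rays in `X` based at `p`: each member is a pair `(A, γ)` of a closed
unbounded subset `A ⊆ [0,∞)` containing `0` and a map `γ : ℝ → X` (regarded on `A`) which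
is injective on `A`, proper, and satisfies `γ 0 = p`. -/
def GoodRayFamily {X : Type*} [TopologicalSpace X] (p : X)
    (Ψ : Set (Set ℝ × (ℝ → X))) : Prop :=
  ∀ r ∈ Ψ, r.1 ⊆ Set.Ici (0 : ℝ) ∧ IsClosed r.1 ∧ ¬Bornology.IsBounded r.1 ∧
    (0 : ℝ) ∈ r.1 ∧ r.2 0 = p ∧ Set.InjOn r.2 r.1 ∧
    ∀ B : Set X, TopBounded B → Bornology.IsBounded (r.1 ∩ r.2 ⁻¹' B)

/-- The compactification `X +_f W` is `Ψ`-accessible. -/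
def AccessibleComp {X W : Type*} [TopologicalSpace X] [TopologicalSpace W]
    (f : Set X → Set W) (Ψ : Set (Set ℝ × (ℝ → X))) : Prop :=
  (∀ w : W, ∃ r ∈ Ψ, f (closure (r.2 '' r.1)) = {w}) ∧
  ∀ r ∈ Ψ, ∃ w : W, f (closure (r.2 '' r.1)) = {w}


/-! ### Auxiliary lemmas for stmt4 -/

section AuxStmt4

open TopologicalSpace

variable {X Y Z W : Type*} [TopologicalSpace X] [TopologicalSpace Y]
  [TopologicalSpace Z] [TopologicalSpace W]

lemma adm_mono {f : Set X → Set W} (hf : Admissible f) {A B : Set X}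
    (hA : IsClosed A) (hB : IsClosed B) (hAB : A ⊆ B) : f A ⊆ f B := by
  have h := hf.2.1 A B hA hB
  rw [union_eq_self_of_subset_left hAB] at h
  rw [h]
  exact subset_union_left

lemma univ_mem_AWClosed (f : Set X → Set W) : univ ∈ AWClosed f :=
  ⟨by simp, by simp, subset_univ _⟩

lemma empty_mem_AWClosed {f : Set X → Set W} (hf : Admissible f) :
    (∅ : Set (X ⊕ W)) ∈ AWClosed f := by
  refine ⟨by simp, by simp, ?_⟩
  have h : Sum.inl ⁻¹' (∅ : Set (X ⊕ W)) = (∅ : Set X) := rfl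
  rw [h, hf.2.2]
  simp

lemma union_mem_AWClosed {f : Set X → Set W} (hf : Admissible f)
    {C D : Set (X ⊕ W)} (hC : C ∈ AWClosed f) (hD : D ∈ AWClosed f) :
    C ∪ D ∈ AWClosed f := by
  obtain ⟨hC1, hC2, hC3⟩ := hC
  obtain ⟨hD1, hD2, hD3⟩ := hD
  refine ⟨by rw [preimage_union]; exact hC1.union hD1,
    by rw [preimage_union]; exact hC2.union hD2, ?_⟩
  have h : Sum.inl ⁻¹' (C ∪ D) = Sum.inl ⁻¹' C ∪ Sum.inl ⁻¹' D := preimage_union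
  rw [h, hf.2.1 _ _ hC1 hD1, image_union]
  exact union_subset_union hC3 hD3

lemma sInter_mem_AWClosed {f : Set X → Set W} (hf : Admissible f)
    {T : Set (Set (X ⊕ W))} (hT : T ⊆ AWClosed f) : ⋂₀ T ∈ AWClosed f := by
  have h1 : IsClosed (Sum.inl ⁻¹' ⋂₀ T) := by
    rw [preimage_sInter]
    exact isClosed_biInter fun t ht => (hT ht).1
  refine ⟨h1, ?_, ?_⟩
  · rw [preimage_sInter]
    exact isClosed_biInter fun t ht => (hT ht).2.1
  · rw [subset_sInter_iff]
    intro t ht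
    refine Subset.trans (image_mono ?_) (hT ht).2.2
    exact adm_mono hf h1 (hT ht).1 (preimage_mono (sInter_subset_of_mem ht))

lemma closed_of_AWClosed {f : Set X → Set W} {C : Set (X ⊕ W)}
    (hC : C ∈ AWClosed f) : IsClosed[AWTop f] C :=
  @IsClosed.mk _ (AWTop f) C (TopologicalSpace.GenerateOpen.basic _ ⟨C, hC, rfl⟩)

lemma AWClosed_of_closed {f : Set X → Set W} (hf : Admissible f) {C : Set (X ⊕ W)}
    (hC : IsClosed[AWTop f] C) : C ∈ AWClosed f := by
  have key : ∀ U : Set (X ⊕ W), GenerateOpen (compl '' AWClosed f) U →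
      Uᶜ ∈ AWClosed f := by
    intro U hU
    induction hU with
    | basic V hV =>
        obtain ⟨D, hD, rfl⟩ := hV
        rwa [compl_compl]
    | univ =>
        rw [compl_univ]
        exact empty_mem_AWClosed hf
    | inter U V _ _ ihU ihV =>
        rw [compl_inter]
        exact union_mem_AWClosed hf ihU ihV
    | sUnion S _ ih =>
        rw [compl_sUnion]
        refine sInter_mem_AWClosed hf ?_
        rintro t ⟨u, hu, rfl⟩
        exact ih u hu
  have h := key Cᶜ hC.isOpen_compl
  rwa [compl_compl] at h

lemma continuous_into_AW {α : Type*} (tα : TopologicalSpace α)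
    {f : Set X → Set W} {h : α → X ⊕ W}
    (H : ∀ C ∈ AWClosed f, IsClosed[tα] (h ⁻¹' C)) :
    Continuous[tα, AWTop f] h := by
  refine continuous_generateFrom_iff.mpr ?_
  rintro s ⟨C, hC, rfl⟩
  rw [preimage_compl]
  exact (H C hC).isOpen_compl

lemma map_preimage_mem_AWClosed
    {f₁ : Set Y → Set Z} {f₂ : Set X → Set W} {π : Y → X} {ϖ : Z → W}
    (hπ : Continuous π) (hϖ : Continuous ϖ)
    (H : ∀ A : Set X, ∀ B : Set W, IsClosed A → IsClosed B → f₂ A ⊆ B →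
      f₁ (π ⁻¹' A) ⊆ ϖ ⁻¹' B)
    {C : Set (X ⊕ W)} (hC : C ∈ AWClosed f₂) :
    Sum.map π ϖ ⁻¹' C ∈ AWClosed f₁ := by
  obtain ⟨h1, h2, h3⟩ := hC
  have e1 : Sum.inl ⁻¹' (Sum.map π ϖ ⁻¹' C) = π ⁻¹' (Sum.inl ⁻¹' C) := rfl
  have e2 : Sum.inr ⁻¹' (Sum.map π ϖ ⁻¹' C) = ϖ ⁻¹' (Sum.inr ⁻¹' C) := rfl
  have hsub : f₁ (π ⁻¹' (Sum.inl ⁻¹' C)) ⊆ ϖ ⁻¹' (Sum.inr ⁻¹' C) :=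
    H _ _ h1 h2 (image_subset_iff.mp h3)
  refine ⟨e1 ▸ h1.preimage hπ, e2 ▸ h2.preimage hϖ, ?_⟩
  rintro _ ⟨z, hz, rfl⟩
  have hz' : z ∈ f₁ (π ⁻¹' (Sum.inl ⁻¹' C)) := by rw [← e1]; exact hz
  exact hsub hz'

end AuxStmt4


/-- with `f* = ` pullback of `f` w.r.t. `π, id_W`, `(f*)* = ` pullback of
`f*` w.r.t. `id_Y, ϖ`, and `f** = ` pullback of `f` w.r.t. `π, ϖ`, the maps
`id+id : Y +_{f**} Z → Y +_{(f*)*} Z`, `id+ϖ : Y +_{(f*)*} Z → Y +_{f*} W` and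
`π+id : Y +_{f*} W → X +_f W` are continuous; consequently for every admissible `g`
with `π+ϖ : Y +_g Z → X +_f W` continuous, `id+ϖ : Y +_g Z → Y +_{f*} W` is continuous. -/
theorem stmt4 {X Y Z W : Type*} [TopologicalSpace X] [TopologicalSpace Y]
    [TopologicalSpace Z] [TopologicalSpace W]
    (f : Set X → Set W) (hf : Admissible f)
    (π : Y → X) (ϖ : Z → W) (hπ : Continuous π) (hϖ : Continuous ϖ) :
    Continuous[AWTop (pullbackAW f π ϖ),
        AWTop (pullbackAW (pullbackAW f π (id : W → W)) (id : Y → Y) ϖ)]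
      (id : Y ⊕ Z → Y ⊕ Z) ∧
    Continuous[AWTop (pullbackAW (pullbackAW f π (id : W → W)) (id : Y → Y) ϖ),
        AWTop (pullbackAW f π (id : W → W))]
      (Sum.map (id : Y → Y) ϖ) ∧
    Continuous[AWTop (pullbackAW f π (id : W → W)), AWTop f]
      (Sum.map π (id : W → W)) ∧
    ∀ g : Set Y → Set Z, Admissible g →
      Continuous[AWTop g, AWTop f] (Sum.map π ϖ) →
      Continuous[AWTop g, AWTop (pullbackAW f π (id : W → W))] (Sum.map (id : Y → Y) ϖ) := by
  have hfstar_closed : ∀ A : Set Y, IsClosed (pullbackAW f π (id : W → W) A) :=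
    fun A => isClosed_closure
  -- key subset fact: f** A ⊆ preimage under ϖ of f* A's defining closure, etc.
  constructor
  · -- id : Y +_{f**} Z → Y +_{(f*)*} Z continuous
    refine continuous_into_AW _ ?_
    intro C hC
    refine closed_of_AWClosed ?_
    obtain ⟨h1, h2, h3⟩ := hC
    have e0 : (id : Y ⊕ Z → Y ⊕ Z) ⁻¹' C = C := rfl
    rw [e0]
    refine ⟨h1, h2, ?_⟩
    refine Subset.trans (image_mono ?_) h3
    -- f** A ⊆ (f*)* A for A := Sum.inl ⁻¹' C
    show pullbackAW f π ϖ (Sum.inl ⁻¹' C) ⊆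
      pullbackAW (pullbackAW f π (id : W → W)) (id : Y → Y) ϖ (Sum.inl ⁻¹' C)
    unfold pullbackAW
    rw [image_id, h1.closure_eq, preimage_id]
    exact closure_mono (preimage_mono subset_closure)
  constructor
  · -- id + ϖ : Y +_{(f*)*} Z → Y +_{f*} W continuous
    refine continuous_into_AW _ ?_
    intro C hC
    refine closed_of_AWClosed (map_preimage_mem_AWClosed continuous_id hϖ ?_ hC)
    intro A B hA hB hAB
    show closure (ϖ ⁻¹' (pullbackAW f π (id : W → W)
        (closure ((id : Y → Y) '' ((id : Y → Y) ⁻¹' A))))) ⊆ ϖ ⁻¹' B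
    refine closure_minimal (preimage_mono ?_) (hB.preimage hϖ)
    rw [image_id, preimage_id, hA.closure_eq]
    exact hAB
  constructor
  · -- π + id : Y +_{f*} W → X +_f W continuous
    refine continuous_into_AW _ ?_
    intro C hC
    refine closed_of_AWClosed (map_preimage_mem_AWClosed hπ continuous_id ?_ hC)
    intro A B hA hB hAB
    show closure ((id : W → W) ⁻¹' (f (closure (π '' (π ⁻¹' A))))) ⊆ (id : W → W) ⁻¹' B
    rw [preimage_id, preimage_id]
    refine closure_minimal (Subset.trans ?_ hAB) hB
    exact adm_mono hf isClosed_closure hA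
      (closure_minimal (image_preimage_subset π A) hA)
  · -- universal property
    intro g hg hcont
    refine continuous_into_AW _ ?_
    intro C hC
    refine closed_of_AWClosed (map_preimage_mem_AWClosed continuous_id hϖ ?_ hC)
    intro A B hA hB hAB
    rw [preimage_id]
    -- construct the closed set in X +_f W
    set K : Set X := closure (π '' A) with hK
    have hKc : IsClosed K := isClosed_closure
    have hfKc : IsClosed (f K) := hf.1 K hKc
    set D : Set (X ⊕ W) := Sum.inl '' K ∪ Sum.inr '' f K with hD
    have eL : Sum.inl ⁻¹' D = K := by
      ext x
      simp [hD]
    have eR : Sum.inr ⁻¹' D = f K := by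
      ext w
      simp [hD]
    have hDcl : D ∈ AWClosed f := by
      refine ⟨by rw [eL]; exact hKc, by rw [eR]; exact hfKc, ?_⟩
      rw [eL]
      exact subset_union_right
    have hDclosed : IsClosed[AWTop f] D := closed_of_AWClosed hDcl
    have hpre : IsClosed[AWTop g] (Sum.map π ϖ ⁻¹' D) :=
      @IsClosed.preimage _ _ (AWTop g) (AWTop f) _ hcont _ hDclosed
    have hpre' : Sum.map π ϖ ⁻¹' D ∈ AWClosed g := AWClosed_of_closed hg hpre
    obtain ⟨hp1, hp2, hp3⟩ := hpre'
    have e1 : Sum.inl ⁻¹' (Sum.map π ϖ ⁻¹' D) = π ⁻¹' K := by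
      rw [show Sum.inl ⁻¹' (Sum.map π ϖ ⁻¹' D) = π ⁻¹' (Sum.inl ⁻¹' D) from rfl, eL]
    have e2 : Sum.inr ⁻¹' (Sum.map π ϖ ⁻¹' D) = ϖ ⁻¹' f K := by
      rw [show Sum.inr ⁻¹' (Sum.map π ϖ ⁻¹' D) = ϖ ⁻¹' (Sum.inr ⁻¹' D) from rfl, eR]
    have hg3 : g (π ⁻¹' K) ⊆ ϖ ⁻¹' f K := by
      have := image_subset_iff.mp hp3
      rwa [e1, e2] at this
    have hAK : A ⊆ π ⁻¹' K := fun y hy =>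
      subset_closure (mem_image_of_mem π hy)
    have hgA : g A ⊆ ϖ ⁻¹' f K :=
      Subset.trans (adm_mono hg hA (hKc.preimage hπ) hAK) hg3
    refine Subset.trans hgA (preimage_mono ?_)
    refine Subset.trans ?_ hAB
    show f K ⊆ closure ((id : W → W) ⁻¹' (f (closure (π '' A))))
    rw [preimage_id, hK]
    exact subset_closure

end Paper
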